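/- For a classical-quantum state ρ_XB = |0⟩⟨0| ⊗ σ₀ + |1⟩⟨1| ⊗ σ₁ with binary classical register X, the conditional max-entropy satisfies H_max(X|B) = log(1 + 2 F(σ₀, σ₁)). -/

import Mathlib

open ComplexOrder

/-- The square root of a positive semidefinite matrix, as defined in Mathlib of December 2024. -/
noncomputable def Matrix.PosSemidef.sqrt {n 𝕜 : Type*} [Fintype n] [RCLike 𝕜] [DecidableEq n]
    {A : Matrix n n 𝕜} (hA : Matrix.PosSemidef A) : Matrix n n 𝕜 :=
  hA.1.eigenvectorUnitary.1 * Matrix.diagonal ((↑) ∘ (√·) ∘ hA.1.eigenvalues) *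
  (star hA.1.eigenvectorUnitary : Matrix n n 𝕜)

/-- Trace norm ‖A‖₁ = Tr √(AᴴA). -/
noncomputable def traceNorm {n : Type*} [Fintype n] [DecidableEq n]
    (A : Matrix n n ℂ) : ℝ :=
  ((Matrix.posSemidef_conjTranspose_mul_self A).sqrt.trace).re

namespace Matrix.PosSemidef

open scoped MatrixOrder

lemma sqrt_eq_cfcSqrt {n 𝕜 : Type*} [Fintype n] [RCLike 𝕜] [DecidableEq n]
    {A : Matrix n n 𝕜} (hA : A.PosSemidef) : hA.sqrt = CFC.sqrt A := by
  rw [CFC.sqrt_eq_cfc, cfc_nnreal_eq_real _ A (Matrix.nonneg_iff_posSemidef.mpr hA),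
    hA.1.cfc_eq, Matrix.IsHermitian.cfc, Unitary.conjStarAlgAut_apply]
  unfold Matrix.PosSemidef.sqrt
  congr 3
  funext i
  simp [Real.coe_sqrt, Real.coe_toNNReal', max_eq_left (hA.eigenvalues_nonneg i)]

lemma posSemidef_sqrt {n 𝕜 : Type*} [Fintype n] [RCLike 𝕜] [DecidableEq n]
    {A : Matrix n n 𝕜} (hA : A.PosSemidef) : hA.sqrt.PosSemidef := by
  rw [sqrt_eq_cfcSqrt]
  exact Matrix.nonneg_iff_posSemidef.mp (CFC.sqrt_nonneg A)

lemma sqrt_mul_self {n 𝕜 : Type*} [Fintype n] [RCLike 𝕜] [DecidableEq n]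
    {A : Matrix n n 𝕜} (hA : A.PosSemidef) : hA.sqrt * hA.sqrt = A := by
  rw [sqrt_eq_cfcSqrt]
  exact CFC.sqrt_mul_sqrt_self A (Matrix.nonneg_iff_posSemidef.mpr hA)

lemma sq_sqrt {n 𝕜 : Type*} [Fintype n] [RCLike 𝕜] [DecidableEq n]
    {A : Matrix n n 𝕜} (hA : A.PosSemidef) : hA.sqrt ^ 2 = A := by
  rw [sq]
  exact hA.sqrt_mul_self

lemma eq_sqrt_of_sq_eq {n 𝕜 : Type*} [Fintype n] [RCLike 𝕜] [DecidableEq n]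
    {A : Matrix n n 𝕜} (hA : A.PosSemidef) {B : Matrix n n 𝕜} (hB : B.PosSemidef)
    (hAB : A ^ 2 = B) : A = hB.sqrt := by
  rw [sqrt_eq_cfcSqrt, eq_comm]
  exact CFC.sqrt_unique (by rw [← sq, hAB]) (Matrix.nonneg_iff_posSemidef.mpr hA)

end Matrix.PosSemidef

open Matrix

section Aux

set_option linter.unusedSectionVars false

variable {n : Type*} [Fintype n] [DecidableEq n]

lemma psd_diag_nonneg {P : Matrix n n ℂ} (hP : P.PosSemidef) (i : n) : 0 ≤ P i i := by
  exact hP.diag_nonneg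

lemma psd_trace_re_nonneg {P : Matrix n n ℂ} (hP : P.PosSemidef) : 0 ≤ (P.trace).re := by
  rw [Matrix.trace, Complex.re_sum]
  exact Finset.sum_nonneg fun i _ => (Complex.le_def.mp (psd_diag_nonneg hP i)).1

lemma psd_trace_real {P : Matrix n n ℂ} (hP : P.PosSemidef) : P.trace = ((P.trace.re : ℝ) : ℂ) := by
  have him : P.trace.im = 0 := by
    rw [Matrix.trace, Complex.im_sum]
    exact Finset.sum_eq_zero fun i _ => ((Complex.le_def.mp (psd_diag_nonneg hP i)).2).symm
  exact Complex.ext (by simp) (by simp [him])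

lemma psd_smul {P : Matrix n n ℂ} (hP : P.PosSemidef) {a : ℝ} (ha : 0 ≤ a) :
    ((a : ℂ) • P).PosSemidef := by
  refine ⟨?_, fun x => ?_⟩
  · rw [IsHermitian, conjTranspose_smul, hP.1.eq, Complex.star_def, Complex.conj_ofReal]
  · exact (hP.smul (Complex.zero_le_real.mpr ha)).2 x

lemma cs_trace (A B : Matrix n n ℂ) :
    ((Aᴴ * B).trace).re ≤ Real.sqrt ((Aᴴ * A).trace).re * Real.sqrt ((Bᴴ * B).trace).re := by
  classical
  let f : EuclideanSpace ℂ (n × n) := WithLp.toLp 2 (fun p : n × n => A p.2 p.1)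
  let g : EuclideanSpace ℂ (n × n) := WithLp.toLp 2 (fun p : n × n => B p.2 p.1)
  have hinner : (inner ℂ f g) = (Aᴴ * B).trace := by
    simp only [PiLp.inner_apply, RCLike.inner_apply, Matrix.trace, Matrix.diag,
      Matrix.mul_apply, Matrix.conjTranspose_apply]
    rw [← Finset.sum_product']
    exact Finset.sum_congr rfl fun p _ => mul_comm _ _
  have key : ∀ (C : Matrix n n ℂ) (x : EuclideanSpace ℂ (n × n)),
      x = WithLp.toLp 2 (fun p : n × n => C p.2 p.1) →
      ‖x‖ = Real.sqrt ((Cᴴ * C).trace).re := by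
    intro C x hx
    rw [EuclideanSpace.norm_eq]
    congr 1
    simp only [Matrix.trace, Matrix.diag, Matrix.mul_apply, Matrix.conjTranspose_apply,
      Complex.re_sum]
    rw [← Finset.sum_product']
    refine Finset.sum_congr rfl fun p _ => ?_
    have : x p = C p.2 p.1 := by rw [hx]
    rw [this, Complex.sq_norm, Complex.normSq_apply, Complex.mul_re]
    simp [Complex.conj_re, Complex.conj_im]
  calc ((Aᴴ * B).trace).re = (inner ℂ f g).re := by rw [hinner]
    _ ≤ ‖(inner ℂ f g)‖ := Complex.re_le_norm _
    _ ≤ ‖f‖ * ‖g‖ := norm_inner_le_norm f g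
    _ = _ := by rw [key A f rfl, key B g rfl]

lemma exists_polar (X : Matrix n n ℂ) :
    ∃ U ∈ Matrix.unitaryGroup n ℂ,
      X = U * (Matrix.posSemidef_conjTranspose_mul_self X).sqrt := by
  classical
  have hH := Matrix.posSemidef_conjTranspose_mul_self X
  set hherm : (Xᴴ * X).IsHermitian := hH.1 with hhermdef
  set V : Matrix n n ℂ := (hherm.eigenvectorUnitary : Matrix n n ℂ) with hVdef
  have hV : V ∈ Matrix.unitaryGroup n ℂ := hherm.eigenvectorUnitary.2
  have hVsV : star V * V = 1 := Matrix.mem_unitaryGroup_iff'.mp hV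
  have hVVs : V * star V = 1 := Matrix.mem_unitaryGroup_iff.mp hV
  set lam : n → ℝ := hherm.eigenvalues with hlamdef
  have hlam_nn : ∀ i, 0 ≤ lam i := hH.eigenvalues_nonneg
  set Y : Matrix n n ℂ := X * V with hYdef
  have hYY : Yᴴ * Y = Matrix.diagonal (fun i => (lam i : ℂ)) := by
    have hspec := hherm.spectral_theorem
    rw [Unitary.conjStarAlgAut_apply] at hspec
    calc Yᴴ * Y = star V * (Xᴴ * X) * V := by
          rw [hYdef, conjTranspose_mul]; simp [Matrix.mul_assoc, Matrix.star_eq_conjTranspose]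
      _ = star V * (V * Matrix.diagonal (RCLike.ofReal ∘ lam) * star V) * V := by rw [← hspec]
      _ = Matrix.diagonal (fun i => (lam i : ℂ)) := by
          rw [Matrix.mul_assoc, Matrix.mul_assoc, hVsV, Matrix.mul_one, ← Matrix.mul_assoc, hVsV,
            Matrix.one_mul]
          rfl
  set y : n → EuclideanSpace ℂ n := fun i => WithLp.toLp 2 (fun k => Y k i) with hydef
  have hinner : ∀ i j, (inner ℂ (y i) (y j)) = (Yᴴ * Y) i j := by
    intro i j
    simp [PiLp.inner_apply, RCLike.inner_apply, Matrix.mul_apply, Matrix.conjTranspose_apply,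
      hydef, mul_comm]
  have hinner' : ∀ i j, (inner ℂ (y i) (y j)) = if i = j then (lam i : ℂ) else 0 := by
    intro i j
    rw [hinner, hYY, Matrix.diagonal_apply]
  set s : Set n := {i | lam i ≠ 0} with hsdef
  set u : n → EuclideanSpace ℂ n := fun i => (((Real.sqrt (lam i))⁻¹ : ℝ) : ℂ) • y i with hudef
  have hON : Orthonormal ℂ (s.restrict u) := by
    rw [orthonormal_iff_ite]
    rintro ⟨i, hi⟩ ⟨j, hj⟩
    simp only [Set.restrict, Set.domRestrict, hudef]
    rw [inner_smul_left, inner_smul_right, hinner' i j]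
    rw [Complex.conj_ofReal]
    by_cases hij : i = j
    · subst hij
      rw [if_pos rfl, if_pos rfl]
      have hpos : 0 < lam i := lt_of_le_of_ne (hlam_nn i) (Ne.symm hi)
      rw [← Complex.ofReal_mul, ← Complex.ofReal_mul]
      rw [show ((Real.sqrt (lam i))⁻¹ * ((Real.sqrt (lam i))⁻¹ * lam i)) = 1 by
        rw [← mul_assoc, ← mul_inv, Real.mul_self_sqrt hpos.le]
        field_simp]
      norm_num
    · simp [hij, Subtype.mk.injEq]
  obtain ⟨b, hb⟩ := hON.exists_orthonormalBasis_extension_of_card_eq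
    (by simp [finrank_euclideanSpace])
  set W : Matrix n n ℂ := Matrix.of (fun k i => b i k) with hWdef
  have hWmem : W ∈ Matrix.unitaryGroup n ℂ := by
    rw [Matrix.mem_unitaryGroup_iff']
    ext i j
    have := (orthonormal_iff_ite.mp b.orthonormal) i j
    simp only [PiLp.inner_apply, RCLike.inner_apply] at this
    simp only [Matrix.mul_apply, Matrix.conjTranspose_apply, hWdef, Matrix.of_apply,
      Matrix.one_apply, star]
    rw [← this]
    exact Finset.sum_congr rfl fun _ _ => mul_comm _ _
  have hWD : W * Matrix.diagonal (fun i => ((Real.sqrt (lam i) : ℝ) : ℂ)) = Y := by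
    ext k i
    rw [Matrix.mul_diagonal]
    by_cases hi : lam i = 0
    · have hy0 : y i = 0 := by
        rw [← inner_self_eq_zero (𝕜 := ℂ)]
        rw [hinner' i i, if_pos rfl, hi, Complex.ofReal_zero]
      have : Y k i = 0 := by
        have := congrArg (fun v : EuclideanSpace ℂ n => v k) hy0
        simpa [hydef] using this
      simp [hi, this]
    · have hbi : b i = u i := hb i hi
      have hsq : (Real.sqrt (lam i) : ℂ) ≠ 0 := by
        simp only [ne_eq, Complex.ofReal_eq_zero]
        exact Real.sqrt_ne_zero'.mpr (lt_of_le_of_ne (hlam_nn i) (Ne.symm hi))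
      simp only [hWdef, Matrix.of_apply, hbi, hudef]
      show (((Real.sqrt (lam i))⁻¹ : ℝ) : ℂ) * y i k * (Real.sqrt (lam i) : ℂ) = Y k i
      rw [Complex.ofReal_inv]
      field_simp
      rfl
  have hsqrt : hH.sqrt = V * Matrix.diagonal (fun i => ((Real.sqrt (lam i) : ℝ) : ℂ)) * star V :=
    rfl
  refine ⟨W * star V, ?_, ?_⟩
  · exact Submonoid.mul_mem _ hWmem (Unitary.star_mem hV)
  · rw [hsqrt]
    calc X = X * (V * star V) := by rw [hVVs, Matrix.mul_one]
      _ = Y * star V := by rw [← Matrix.mul_assoc, ← hYdef]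
      _ = W * Matrix.diagonal (fun i => ((Real.sqrt (lam i) : ℝ) : ℂ)) * star V := by rw [hWD]
      _ = W * star V * (V * Matrix.diagonal (fun i => ((Real.sqrt (lam i) : ℝ) : ℂ)) * star V) := by
          simp only [Matrix.mul_assoc]
          rw [← Matrix.mul_assoc (star V) V, hVsV, Matrix.one_mul]

lemma traceNorm_nonneg (X : Matrix n n ℂ) : 0 ≤ traceNorm X :=
  psd_trace_re_nonneg (Matrix.posSemidef_conjTranspose_mul_self X).posSemidef_sqrt

lemma re_trace_unitary_le {U : Matrix n n ℂ} (hU : U ∈ Matrix.unitaryGroup n ℂ)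
    (X : Matrix n n ℂ) : ((U * X).trace).re ≤ traceNorm X := by
  obtain ⟨W, hW, hX⟩ := exists_polar X
  have hH := Matrix.posSemidef_conjTranspose_mul_self X
  set P := hH.sqrt with hPdef
  have hP : P.PosSemidef := hH.posSemidef_sqrt
  set Q := hP.sqrt with hQdef
  have hQQ : Q * Q = P := hP.sqrt_mul_self
  have hQH : Qᴴ = Q := hP.posSemidef_sqrt.1
  have hU' : Uᴴ * U = 1 := by
    rw [← Matrix.star_eq_conjTranspose]; exact Matrix.mem_unitaryGroup_iff'.mp hU
  have hW' : Wᴴ * W = 1 := by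
    rw [← Matrix.star_eq_conjTranspose]; exact Matrix.mem_unitaryGroup_iff'.mp hW
  have h1 : (U * W * Q)ᴴ * (U * W * Q) = P := by
    simp only [Matrix.conjTranspose_mul, Matrix.mul_assoc, hQH]
    rw [← Matrix.mul_assoc Uᴴ U, hU', Matrix.one_mul, ← Matrix.mul_assoc Wᴴ W, hW',
      Matrix.one_mul, hQQ]
  have h2 : ((U * W * Q)ᴴᴴ * Q) = U * X := by
    rw [Matrix.conjTranspose_conjTranspose, hX, ← hQQ]
    simp only [Matrix.mul_assoc]
  have h3 : ((U * W * Q)ᴴᴴ * (U * W * Q)ᴴ).trace = P.trace := by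
    rw [Matrix.conjTranspose_conjTranspose, Matrix.trace_mul_comm, h1]
  have := cs_trace ((U * W * Q)ᴴ) Q
  rw [h2, h3, hQH, hQQ] at this
  calc ((U * X).trace).re ≤ Real.sqrt (P.trace).re * Real.sqrt (P.trace).re := this
    _ = (P.trace).re := Real.mul_self_sqrt (psd_trace_re_nonneg hP)
    _ = traceNorm X := rfl

lemma exists_unitary_trace (X : Matrix n n ℂ) :
    ∃ U ∈ Matrix.unitaryGroup n ℂ, (U * X).trace = ((traceNorm X : ℝ) : ℂ) := by
  obtain ⟨W, hW, hX⟩ := exists_polar X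
  have hH := Matrix.posSemidef_conjTranspose_mul_self X
  have hP : hH.sqrt.PosSemidef := hH.posSemidef_sqrt
  refine ⟨star W, Unitary.star_mem hW, ?_⟩
  have hW' : star W * W = 1 := Matrix.mem_unitaryGroup_iff'.mp hW
  have : star W * X = hH.sqrt := by
    conv_lhs => rw [hX]
    rw [← Matrix.mul_assoc, hW', Matrix.one_mul]
  rw [this]
  exact psd_trace_real hP

lemma traceNorm_conjTranspose (X : Matrix n n ℂ) : traceNorm Xᴴ = traceNorm X := by
  obtain ⟨W, hW, hX⟩ := exists_polar X
  have hH := Matrix.posSemidef_conjTranspose_mul_self X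
  set P := hH.sqrt with hPdef
  have hP : P.PosSemidef := hH.posSemidef_sqrt
  have hPH : Pᴴ = P := hP.1
  have hW' : Wᴴ * W = 1 := by
    rw [← Matrix.star_eq_conjTranspose]; exact Matrix.mem_unitaryGroup_iff'.mp hW
  have hA : (W * P * Wᴴ).PosSemidef := hP.mul_mul_conjTranspose_same W
  have hsq : (W * P * Wᴴ) ^ 2 = Xᴴᴴ * Xᴴ := by
    rw [Matrix.conjTranspose_conjTranspose, hX]
    rw [pow_two]
    rw [Matrix.conjTranspose_mul, hPH]
    simp only [Matrix.mul_assoc]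
    rw [← Matrix.mul_assoc Wᴴ W, hW', Matrix.one_mul]
  have heq : W * P * Wᴴ = (Matrix.posSemidef_conjTranspose_mul_self Xᴴ).sqrt :=
    hA.eq_sqrt_of_sq_eq (Matrix.posSemidef_conjTranspose_mul_self Xᴴ) hsq
  have htr : (W * P * Wᴴ).trace = P.trace := by
    rw [Matrix.trace_mul_cycle, hW', Matrix.one_mul]
  show ((Matrix.posSemidef_conjTranspose_mul_self Xᴴ).sqrt.trace).re = _
  rw [← heq, htr]
  rfl

lemma traceNorm_smul (X : Matrix n n ℂ) {a : ℝ} (ha : 0 ≤ a) :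
    traceNorm ((a : ℂ) • X) = a * traceNorm X := by
  have hH := Matrix.posSemidef_conjTranspose_mul_self X
  set P := hH.sqrt with hPdef
  have hP : P.PosSemidef := hH.posSemidef_sqrt
  have hA : ((a : ℂ) • P).PosSemidef := psd_smul hP ha
  have hsq : ((a : ℂ) • P) ^ 2 = ((a : ℂ) • X)ᴴ * ((a : ℂ) • X) := by
    rw [smul_pow, hH.sq_sqrt, Matrix.conjTranspose_smul, Matrix.smul_mul, Matrix.mul_smul,
      smul_smul]
    rw [Complex.star_def, Complex.conj_ofReal, ← Complex.ofReal_mul, ← Complex.ofReal_pow]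
    norm_cast
    rw [sq]
  have heq : (a : ℂ) • P = (Matrix.posSemidef_conjTranspose_mul_self ((a : ℂ) • X)).sqrt :=
    hA.eq_sqrt_of_sq_eq (Matrix.posSemidef_conjTranspose_mul_self ((a : ℂ) • X)) hsq
  show ((Matrix.posSemidef_conjTranspose_mul_self ((a : ℂ) • X)).sqrt.trace).re = _
  rw [← heq, Matrix.trace_smul, smul_eq_mul, Complex.re_ofReal_mul]
  rfl

lemma tn_mul_comm_herm {A B : Matrix n n ℂ} (hA : Aᴴ = A) (hB : Bᴴ = B) :
    traceNorm (B * A) = traceNorm (A * B) := by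
  rw [← traceNorm_conjTranspose (A * B), Matrix.conjTranspose_mul, hA, hB]

lemma aux_upper {σ₀ σ₁ ρ : Matrix n n ℂ} (h₀ : σ₀.PosSemidef) (h₁ : σ₁.PosSemidef)
    (hρ : ρ.PosSemidef) (htr : σ₀.trace + σ₁.trace = 1) (hρtr : ρ.trace = 1) :
    traceNorm (h₀.sqrt * hρ.sqrt) + traceNorm (h₁.sqrt * hρ.sqrt)
      ≤ Real.sqrt (1 + 2 * traceNorm (h₀.sqrt * h₁.sqrt)) := by
  set S₀ := h₀.sqrt with hS₀def
  set S₁ := h₁.sqrt with hS₁def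
  set R := hρ.sqrt with hRdef
  have hS₀H : S₀ᴴ = S₀ := h₀.posSemidef_sqrt.1
  have hS₁H : S₁ᴴ = S₁ := h₁.posSemidef_sqrt.1
  have hRH : Rᴴ = R := hρ.posSemidef_sqrt.1
  obtain ⟨U₀, hU₀, e₀⟩ := exists_unitary_trace (S₀ * R)
  obtain ⟨U₁, hU₁, e₁⟩ := exists_unitary_trace (S₁ * R)
  have hU₀' : U₀ᴴ * U₀ = 1 := by
    rw [← Matrix.star_eq_conjTranspose]; exact Matrix.mem_unitaryGroup_iff'.mp hU₀
  have hU₁' : U₁ᴴ * U₁ = 1 := by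
    rw [← Matrix.star_eq_conjTranspose]; exact Matrix.mem_unitaryGroup_iff'.mp hU₁
  set N := U₀ * S₀ + U₁ * S₁ with hNdef
  have hNR : ((N * R).trace).re = traceNorm (S₀ * R) + traceNorm (S₁ * R) := by
    rw [hNdef, Matrix.add_mul, Matrix.trace_add, Matrix.mul_assoc, Matrix.mul_assoc, e₀, e₁]
    simp
  -- trace of N * Nᴴ
  have hNH : Nᴴ = S₀ * U₀ᴴ + S₁ * U₁ᴴ := by
    rw [hNdef, Matrix.conjTranspose_add, Matrix.conjTranspose_mul, Matrix.conjTranspose_mul,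
      hS₀H, hS₁H]
  have ht1 : (U₀ * S₀ * (S₀ * U₀ᴴ)).trace = σ₀.trace := by
    rw [Matrix.trace_mul_comm (U₀ * S₀) (S₀ * U₀ᴴ)]
    simp only [Matrix.mul_assoc]
    rw [← Matrix.mul_assoc U₀ᴴ U₀, hU₀', Matrix.one_mul, h₀.sqrt_mul_self]
  have ht4 : (U₁ * S₁ * (S₁ * U₁ᴴ)).trace = σ₁.trace := by
    rw [Matrix.trace_mul_comm (U₁ * S₁) (S₁ * U₁ᴴ)]
    simp only [Matrix.mul_assoc]
    rw [← Matrix.mul_assoc U₁ᴴ U₁, hU₁', Matrix.one_mul, h₁.sqrt_mul_self]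
  have ht2 : ((U₀ * S₀ * (S₁ * U₁ᴴ)).trace).re ≤ traceNorm (S₀ * S₁) := by
    have hmem : (star U₁) * U₀ ∈ Matrix.unitaryGroup n ℂ :=
      Submonoid.mul_mem _ (Unitary.star_mem hU₁) hU₀
    have : (U₀ * S₀ * (S₁ * U₁ᴴ)).trace = ((star U₁ * U₀) * (S₀ * S₁)).trace := by
      rw [Matrix.star_eq_conjTranspose, Matrix.trace_mul_comm (U₀ * S₀) (S₁ * U₁ᴴ)]
      simp only [Matrix.mul_assoc]
      rw [Matrix.trace_mul_comm S₁ (U₁ᴴ * (U₀ * S₀))]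
      simp only [Matrix.mul_assoc]
    rw [this]
    exact re_trace_unitary_le hmem _
  have ht3 : ((U₁ * S₁ * (S₀ * U₀ᴴ)).trace).re ≤ traceNorm (S₀ * S₁) := by
    have hmem : (star U₀) * U₁ ∈ Matrix.unitaryGroup n ℂ :=
      Submonoid.mul_mem _ (Unitary.star_mem hU₀) hU₁
    have : (U₁ * S₁ * (S₀ * U₀ᴴ)).trace = ((star U₀ * U₁) * (S₁ * S₀)).trace := by
      rw [Matrix.star_eq_conjTranspose, Matrix.trace_mul_comm (U₁ * S₁) (S₀ * U₀ᴴ)]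
      simp only [Matrix.mul_assoc]
      rw [Matrix.trace_mul_comm S₀ (U₀ᴴ * (U₁ * S₁))]
      simp only [Matrix.mul_assoc]
    rw [this, ← tn_mul_comm_herm hS₀H hS₁H]
    exact re_trace_unitary_le hmem _
  have hNN : ((N * Nᴴ).trace).re ≤ 1 + 2 * traceNorm (S₀ * S₁) := by
    have hexp : N * Nᴴ = U₀ * S₀ * (S₀ * U₀ᴴ) + U₀ * S₀ * (S₁ * U₁ᴴ)
        + (U₁ * S₁ * (S₀ * U₀ᴴ) + U₁ * S₁ * (S₁ * U₁ᴴ)) := by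
      rw [hNH, hNdef, Matrix.add_mul, Matrix.mul_add, Matrix.mul_add]
    rw [hexp, Matrix.trace_add, Matrix.trace_add, Matrix.trace_add, ht1, ht4]
    have h1 : ((σ₀.trace + (U₀ * S₀ * (S₁ * U₁ᴴ)).trace
        + ((U₁ * S₁ * (S₀ * U₀ᴴ)).trace + σ₁.trace)).re)
        = 1 + (((U₀ * S₀ * (S₁ * U₁ᴴ)).trace).re + ((U₁ * S₁ * (S₀ * U₀ᴴ)).trace).re) := by
      have : σ₀.trace + (U₀ * S₀ * (S₁ * U₁ᴴ)).trace + ((U₁ * S₁ * (S₀ * U₀ᴴ)).trace + σ₁.trace)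
          = 1 + ((U₀ * S₀ * (S₁ * U₁ᴴ)).trace + (U₁ * S₁ * (S₀ * U₀ᴴ)).trace) := by
        rw [← htr]; ring
      rw [this]
      simp [Complex.add_re]
    rw [h1]
    linarith
  -- Cauchy-Schwarz
  have hcs := cs_trace Nᴴ R
  rw [Matrix.conjTranspose_conjTranspose] at hcs
  have hRR : ((Rᴴ * R).trace).re = 1 := by
    rw [hRH, hρ.sqrt_mul_self, hρtr, Complex.one_re]
  rw [hRR, Real.sqrt_one, mul_one, hNR] at hcs
  calc traceNorm (S₀ * R) + traceNorm (S₁ * R) ≤ Real.sqrt ((N * Nᴴ).trace).re := hcs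
    _ ≤ Real.sqrt (1 + 2 * traceNorm (S₀ * S₁)) := Real.sqrt_le_sqrt hNN

lemma aux_lower {σ₀ σ₁ : Matrix n n ℂ} (h₀ : σ₀.PosSemidef) (h₁ : σ₁.PosSemidef)
    (htr : σ₀.trace + σ₁.trace = 1) :
    ∃ ρ : Matrix n n ℂ, ∃ hρ : ρ.PosSemidef, ρ.trace = 1 ∧
      Real.sqrt (1 + 2 * traceNorm (h₀.sqrt * h₁.sqrt))
        ≤ traceNorm (h₀.sqrt * hρ.sqrt) + traceNorm (h₁.sqrt * hρ.sqrt) := by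
  set S₀ := h₀.sqrt with hS₀def
  set S₁ := h₁.sqrt with hS₁def
  have hS₀H : S₀ᴴ = S₀ := h₀.posSemidef_sqrt.1
  have hS₁H : S₁ᴴ = S₁ := h₁.posSemidef_sqrt.1
  set F := traceNorm (S₀ * S₁) with hFdef
  have hF0 : 0 ≤ F := traceNorm_nonneg _
  set c : ℝ := 1 + 2 * F with hcdef
  have hcpos : (0:ℝ) < c := by rw [hcdef]; linarith
  have hsc : Real.sqrt c * Real.sqrt c = c := Real.mul_self_sqrt hcpos.le
  have hscpos : 0 < Real.sqrt c := Real.sqrt_pos.mpr hcpos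
  obtain ⟨V, hV, eV⟩ := exists_unitary_trace (S₁ * S₀)
  have eV' : (V * (S₁ * S₀)).trace = ((F : ℝ) : ℂ) := by
    rw [eV, hFdef, ← tn_mul_comm_herm hS₀H hS₁H]
  have hV' : Vᴴ * V = 1 := by
    rw [← Matrix.star_eq_conjTranspose]; exact Matrix.mem_unitaryGroup_iff'.mp hV
  set M := S₀ + V * S₁ with hMdef
  have hMH : Mᴴ = S₀ + S₁ * Vᴴ := by
    rw [hMdef, Matrix.conjTranspose_add, Matrix.conjTranspose_mul, hS₀H, hS₁H]
  have htrM : (Mᴴ * M).trace = ((c : ℝ) : ℂ) := by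
    have hexp : Mᴴ * M = σ₀ + S₀ * (V * S₁) + (S₁ * Vᴴ * S₀ + σ₁) := by
      rw [hMH, hMdef, Matrix.add_mul, Matrix.mul_add, Matrix.mul_add]
      rw [h₀.sqrt_mul_self]
      have h5 : S₁ * Vᴴ * (V * S₁) = σ₁ := by
        rw [Matrix.mul_assoc S₁ Vᴴ, ← Matrix.mul_assoc Vᴴ V, hV', Matrix.one_mul,
          h₁.sqrt_mul_self]
      rw [h5]
    have hcross1 : (S₀ * (V * S₁)).trace = ((F : ℝ) : ℂ) := by
      rw [Matrix.trace_mul_comm S₀ (V * S₁), ← eV']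
      simp only [Matrix.mul_assoc]
    have hcross2 : (S₁ * Vᴴ * S₀).trace = ((F : ℝ) : ℂ) := by
      have h1 : S₀ * S₁ * Vᴴ = (V * (S₁ * S₀))ᴴ := by
        simp only [Matrix.conjTranspose_mul, hS₀H, hS₁H]
      rw [Matrix.trace_mul_cycle S₁ Vᴴ S₀, h1, Matrix.trace_conjTranspose, eV']
      simp [Complex.star_def, Complex.conj_ofReal]
    rw [hexp, Matrix.trace_add, Matrix.trace_add, Matrix.trace_add, hcross1, hcross2]
    have h6 : σ₀.trace + ((F : ℝ) : ℂ) + (((F : ℝ) : ℂ) + σ₁.trace)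
        = (σ₀.trace + σ₁.trace) + (((F : ℝ) : ℂ) + ((F : ℝ) : ℂ)) := by ring
    rw [h6, htr, hcdef]
    push_cast
    ring
  have hMM := Matrix.posSemidef_conjTranspose_mul_self M
  set Q := hMM.sqrt with hQdef
  have hQpsd : Q.PosSemidef := hMM.posSemidef_sqrt
  have hQH : Qᴴ = Q := hQpsd.1
  have hρ : (((c⁻¹ : ℝ) : ℂ) • (Mᴴ * M)).PosSemidef := psd_smul hMM (inv_nonneg.mpr hcpos.le)
  refine ⟨((c⁻¹ : ℝ) : ℂ) • (Mᴴ * M), hρ, ?_, ?_⟩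
  · rw [Matrix.trace_smul, htrM, smul_eq_mul, ← Complex.ofReal_mul,
      inv_mul_cancel₀ hcpos.ne', Complex.ofReal_one]
  · have hRQ : hρ.sqrt = (((Real.sqrt c)⁻¹ : ℝ) : ℂ) • Q := by
      have hApsd : ((((Real.sqrt c)⁻¹ : ℝ) : ℂ) • Q).PosSemidef :=
        psd_smul hQpsd (inv_nonneg.mpr hscpos.le)
      have hsq : ((((Real.sqrt c)⁻¹ : ℝ) : ℂ) • Q) ^ 2 = ((c⁻¹ : ℝ) : ℂ) • (Mᴴ * M) := by
        rw [smul_pow, hMM.sq_sqrt]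
        congr 1
        rw [← Complex.ofReal_pow]
        congr 1
        rw [sq, ← mul_inv, hsc]
      exact (hApsd.eq_sqrt_of_sq_eq hρ hsq).symm
    obtain ⟨W, hW, hWQ⟩ := exists_polar M
    have hkey : c ≤ traceNorm (S₀ * Q) + traceNorm (S₁ * Q) := by
      have hsplit : (Mᴴ * M).trace = (W * (Q * S₀)).trace + ((Vᴴ * W) * (Q * S₁)).trace := by
        calc (Mᴴ * M).trace = ((S₀ + S₁ * Vᴴ) * (W * Q)).trace := by rw [← hMH, ← hWQ]
          _ = (S₀ * (W * Q)).trace + (S₁ * Vᴴ * (W * Q)).trace := by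
              rw [Matrix.add_mul, Matrix.trace_add]
          _ = (W * (Q * S₀)).trace + ((Vᴴ * W) * (Q * S₁)).trace := by
              congr 1
              · rw [Matrix.trace_mul_comm S₀ (W * Q)]
                simp only [Matrix.mul_assoc]
              · simp only [Matrix.mul_assoc]
                rw [Matrix.trace_mul_comm S₁ (Vᴴ * (W * Q))]
                simp only [Matrix.mul_assoc]
      have hre : c = ((W * (Q * S₀)).trace).re + (((Vᴴ * W) * (Q * S₁)).trace).re := by
        have h7 : ((c : ℝ) : ℂ) = (W * (Q * S₀)).trace + ((Vᴴ * W) * (Q * S₁)).trace := by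
          rw [← htrM, hsplit]
        have := congrArg Complex.re h7
        simpa [Complex.add_re] using this
      have hb1 : ((W * (Q * S₀)).trace).re ≤ traceNorm (S₀ * Q) := by
        rw [← tn_mul_comm_herm hS₀H hQH]
        exact re_trace_unitary_le hW _
      have hb2 : (((Vᴴ * W) * (Q * S₁)).trace).re ≤ traceNorm (S₁ * Q) := by
        rw [← tn_mul_comm_herm hS₁H hQH]
        have hmem : Vᴴ * W ∈ Matrix.unitaryGroup n ℂ := by
          rw [← Matrix.star_eq_conjTranspose]
          exact Submonoid.mul_mem _ (Unitary.star_mem hV) hW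
        exact re_trace_unitary_le hmem _
      rw [hre]
      exact add_le_add hb1 hb2
    rw [hRQ, Matrix.mul_smul, Matrix.mul_smul,
      traceNorm_smul _ (inv_nonneg.mpr hscpos.le), traceNorm_smul _ (inv_nonneg.mpr hscpos.le)]
    have h8 : (Real.sqrt c)⁻¹ * c = Real.sqrt c := by
      rw [inv_mul_eq_div, div_eq_iff hscpos.ne']
      exact hsc.symm
    calc Real.sqrt c = (Real.sqrt c)⁻¹ * c := h8.symm
      _ ≤ (Real.sqrt c)⁻¹ * (traceNorm (S₀ * Q) + traceNorm (S₁ * Q)) :=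
          mul_le_mul_of_nonneg_left hkey (inv_nonneg.mpr hscpos.le)
      _ = (Real.sqrt c)⁻¹ * traceNorm (S₀ * Q) + (Real.sqrt c)⁻¹ * traceNorm (S₁ * Q) := by ring

end Aux

/-- For a cq state with binary register, H_max(X|B) = log₂(1 + 2 F(σ₀,σ₁)),
where H_max(X|B) = 2 log₂ max_ρ (F(σ₀,ρ) + F(σ₁,ρ)). -/
theorem hmax_cq_binary
    {n : Type*} [Fintype n] [DecidableEq n]
    (σ₀ σ₁ : Matrix n n ℂ) (h₀ : σ₀.PosSemidef) (h₁ : σ₁.PosSemidef)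
    (htr : σ₀.trace + σ₁.trace = 1) (m : ℝ)
    (hm : IsGreatest
      {x : ℝ | ∃ ρ : Matrix n n ℂ, ∃ hρ : ρ.PosSemidef, ρ.trace = 1 ∧
        x = traceNorm (h₀.sqrt * hρ.sqrt) + traceNorm (h₁.sqrt * hρ.sqrt)} m) :
    2 * Real.logb 2 m = Real.logb 2 (1 + 2 * traceNorm (h₀.sqrt * h₁.sqrt)) := by
  have hF0 : 0 ≤ traceNorm (h₀.sqrt * h₁.sqrt) := traceNorm_nonneg _
  set c : ℝ := 1 + 2 * traceNorm (h₀.sqrt * h₁.sqrt) with hcdef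
  have hcpos : 0 < c := by rw [hcdef]; linarith
  have hup : m ≤ Real.sqrt c := by
    obtain ⟨ρ, hρ, hρtr, hx⟩ := hm.1
    rw [hx]
    exact aux_upper h₀ h₁ hρ htr hρtr
  have hlo : Real.sqrt c ≤ m := by
    obtain ⟨ρ, hρ, hρtr, hge⟩ := aux_lower h₀ h₁ htr
    exact le_trans hge (hm.2 ⟨ρ, hρ, hρtr, rfl⟩)
  have hmeq : m = Real.sqrt c := le_antisymm hup hlo
  have hm2 : m ^ 2 = c := by rw [hmeq, Real.sq_sqrt hcpos.le]
  rw [← hm2, Real.logb_pow]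
  norm_num
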